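/- Let A be an abelian group and let B, B* be groups such that B* is a homomorphic image of B (there is a surjective group homomorphism B →* B*). Then the wreath product A ≀ B* lies in var(A ≀ B), i.e., every law of A ≀ B is a law of A ≀ B*. -/

import Mathlib

/-- A word `w` in the free group on `k` generators is a law of the group `H`
if every homomorphism from the free group to `H` sends `w` to `1`. -/
def IsGroupLaw (H : Type*) [Group H] {k : ℕ} (w : FreeGroup (Fin k)) : Prop :=
  ∀ φ : FreeGroup (Fin k) →* H, φ w = 1

/-- `G` lies in the variety generated by `H`: every law of `H` is a law of `G`. -/
def InVariety (G : Type*) [Group G] (H : Type*) [Group H] : Prop :=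
  ∀ (k : ℕ) (w : FreeGroup (Fin k)), IsGroupLaw H w → IsGroupLaw G w

/-- The shifting action of `B` on the Cartesian power `B → A`:
`(b • f) x = f (b⁻¹ * x)`. -/
def wreathShift (A B : Type*) [Group A] [Group B] : B →* MulAut (B → A) where
  toFun b :=
    { toFun := fun f x => f (b⁻¹ * x)
      invFun := fun f x => f (b * x)
      left_inv := fun f => by funext x; simp [mul_assoc]
      right_inv := fun f => by funext x; simp [mul_assoc]
      map_mul' := fun f g => rfl }
  map_one' := by ext f x; simp
  map_mul' b₁ b₂ := by ext f x; simp [mul_assoc]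

/-- The (standard, Cartesian) wreath product `A ≀ B = (B → A) ⋊ B`. -/
abbrev WreathProduct (A B : Type*) [Group A] [Group B] : Type _ :=
  SemidirectProduct (B → A) B (wreathShift A B)

theorem wreath_quotient_active_in_variety_of_comm
    (A B B' : Type*) [CommGroup A] [Group B] [Group B']
    (f : B →* B') (hf : Function.Surjective f) :
    InVariety (WreathProduct A B') (WreathProduct A B) := by
  intro k w hw φ
  choose sec hsec using hf
  let ψ : FreeGroup (Fin k) →* WreathProduct A B :=
    FreeGroup.lift fun i =>
      ⟨(φ (FreeGroup.of i)).left ∘ f, sec (φ (FreeGroup.of i)).right⟩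
  have key : ∀ x : FreeGroup (Fin k),
      (ψ x).left = (φ x).left ∘ f ∧ f (ψ x).right = (φ x).right := by
    intro x
    induction x using FreeGroup.induction_on with
    | C1 => simp
    | of i =>
      have hψ : ψ (FreeGroup.of i) =
          ⟨(φ (FreeGroup.of i)).left ∘ f, sec (φ (FreeGroup.of i)).right⟩ :=
        FreeGroup.lift_apply_of
      refine ⟨?_, ?_⟩
      · show (ψ (FreeGroup.of i)).left = (φ (FreeGroup.of i)).left ∘ f
        rw [hψ]
      · show f (ψ (FreeGroup.of i)).right = (φ (FreeGroup.of i)).right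
        rw [hψ]; exact hsec _
    | inv_of i h =>
      obtain ⟨h1, h2⟩ := h
      refine ⟨?_, ?_⟩
      · funext t
        rw [map_inv, map_inv, SemidirectProduct.inv_left, SemidirectProduct.inv_left]
        simp only [wreathShift, MonoidHom.coe_mk, OneHom.coe_mk, MulEquiv.coe_mk,
          Equiv.coe_fn_mk, Pi.inv_apply, Function.comp_apply, inv_inv]
        rw [h1]
        simp only [Function.comp_apply]
        rw [map_mul, h2]
      · rw [map_inv, map_inv, SemidirectProduct.inv_right, SemidirectProduct.inv_right,
          map_inv, h2]
    | mul x y hx hy =>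
      obtain ⟨hx1, hx2⟩ := hx
      obtain ⟨hy1, hy2⟩ := hy
      constructor
      · funext t
        simp only [map_mul, SemidirectProduct.mul_left, wreathShift,
          MonoidHom.coe_mk, OneHom.coe_mk, MulEquiv.coe_mk, Equiv.coe_fn_mk,
          Pi.mul_apply, Function.comp_apply]
        rw [hx1, hy1]
        simp only [Function.comp_apply]
        rw [map_mul, map_inv, hx2]
      · simp only [map_mul, SemidirectProduct.mul_right, hx2, hy2]
  have h1 := key w
  rw [hw ψ] at h1
  obtain ⟨hl, hr⟩ := h1
  have hleft : (φ w).left = 1 := by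
    funext t'
    have h := congrFun hl.symm (sec t')
    simpa [hsec t'] using h
  have hright : (φ w).right = 1 := by
    rw [← hr]; simp
  apply SemidirectProduct.ext <;> simp [hleft, hright]
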